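/- Let 𝓗 = ([r], ℰ) be a simple hypergraph with no isolated vertices, each edge of cardinality at least 2, and no edge contained in another. Let K be a field, R = K[X_1,…,X_r], and J(𝓗) ⊆ R the cover ideal of 𝓗. Then astab(J(𝓗)) ≥ χ(𝓗) − 1, where χ(𝓗) is the chromatic number of 𝓗. -/

import Mathlib

/-- The graded maximal ideal `𝔪 = (X₁,…,X_r)` of `K[X₁,…,X_r]`. -/
noncomputable def mxIdeal (K : Type) [Field K] (r : ℕ) : Ideal (MvPolynomial (Fin r) K) :=
  Ideal.span (Set.range (MvPolynomial.X : Fin r → MvPolynomial (Fin r) K))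

/-- A monomial ideal: an ideal generated by monomials `X^α`. -/
def IsMonomialIdeal {K : Type} [Field K] {r : ℕ} (I : Ideal (MvPolynomial (Fin r) K)) : Prop :=
  ∃ S : Set (Fin r →₀ ℕ),
    I = Ideal.span ((fun α : Fin r →₀ ℕ => MvPolynomial.monomial α (1 : K)) '' S)

/-- `astab I` is the least `s ≥ 1` such that `Ass(R/Iⁿ) = Ass(R/Iˢ)` for all `n ≥ s`. -/
noncomputable def astab {R : Type} [CommRing R] (I : Ideal R) : ℕ :=
  sInf {s : ℕ | 1 ≤ s ∧ ∀ n : ℕ, s ≤ n →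
    associatedPrimes R (R ⧸ I ^ n) = associatedPrimes R (R ⧸ I ^ s)}

/-- `W` is a vertex cover of the hypergraph with edge set `E`: it meets every edge. -/
def IsVertexCover {r : ℕ} (E : Set (Finset (Fin r))) (W : Finset (Fin r)) : Prop :=
  ∀ e ∈ E, ∃ v ∈ e, v ∈ W

/-- The cover ideal `J(𝓗)` of a hypergraph: generated by the squarefree monomials
`∏_{i ∈ W} Xᵢ` over the minimal vertex covers `W`. -/
noncomputable def coverIdeal (K : Type) [Field K] {r : ℕ} (E : Set (Finset (Fin r))) :
    Ideal (MvPolynomial (Fin r) K) :=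
  Ideal.span {p | ∃ W : Finset (Fin r), IsVertexCover E W ∧
    (∀ W' ⊆ W, IsVertexCover E W' → W' = W) ∧ p = ∏ i ∈ W, MvPolynomial.X i}

/-- The chromatic number of a hypergraph: the least `t` admitting a `t`-coloring,
i.e. a partition of the vertices into `t` classes with no edge contained in a class. -/
noncomputable def hChromaticNumber {r : ℕ} (E : Set (Finset (Fin r))) : ℕ :=
  sInf {t : ℕ | ∃ c : Fin r → Fin t, ∀ e ∈ E, ∀ i : Fin t, ¬ (∀ v ∈ e, c v = i)}

open MvPolynomial


namespace FHVT

variable {K : Type} [Field K] {r : ℕ}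

/-- span of monomials with exponents in `A` -/
noncomputable def msp (K : Type) [Field K] {r : ℕ} (A : Set (Fin r →₀ ℕ)) : Ideal (MvPolynomial (Fin r) K) :=
  Ideal.span ((fun a : Fin r →₀ ℕ => MvPolynomial.monomial a (1 : K)) '' A)

theorem mem_msp_iff {A : Set (Fin r →₀ ℕ)} {f : MvPolynomial (Fin r) K} :
    f ∈ msp K A ↔ ∀ α ∈ f.support, ∃ a ∈ A, a ≤ α := by
  classical
  constructor
  · intro hf
    let T : Ideal (MvPolynomial (Fin r) K) :=
      { carrier := {g | ∀ α ∈ g.support, ∃ a ∈ A, a ≤ α}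
        add_mem' := by
          intro g h hg hh α hα
          rcases Finset.mem_union.1 (MvPolynomial.support_add hα) with h' | h'
          · exact hg α h'
          · exact hh α h'
        zero_mem' := by intro α hα; simp at hα
        smul_mem' := by
          intro c g hg α hα
          rw [smul_eq_mul] at hα
          have := MvPolynomial.support_mul c g hα
          rcases Finset.mem_add.1 this with ⟨β, hβ, γ, hγ, rfl⟩
          obtain ⟨a, ha, hle⟩ := hg γ hγ
          exact ⟨a, ha, hle.trans (le_add_self)⟩ }
    have hle : msp K A ≤ T := by
      rw [msp, Ideal.span_le]
      rintro p ⟨a, ha, rfl⟩ α hα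
      rw [MvPolynomial.support_monomial] at hα
      simp only [one_ne_zero, if_false] at hα
      rw [Finset.mem_singleton] at hα
      exact ⟨a, ha, le_of_eq hα.symm⟩
    exact hle hf
  · intro h
    rw [MvPolynomial.as_sum f]
    apply Ideal.sum_mem
    intro α hα
    obtain ⟨a, ha, hle⟩ := h α hα
    have : (MvPolynomial.monomial α) (MvPolynomial.coeff α f)
        = (MvPolynomial.monomial (α - a)) (MvPolynomial.coeff α f) * MvPolynomial.monomial a 1 := by
      rw [MvPolynomial.monomial_mul, mul_one, tsub_add_cancel_of_le hle]
    rw [this]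
    exact Ideal.mul_mem_left _ _ (Ideal.subset_span ⟨a, ha, rfl⟩)

theorem monomial_mem_msp_iff {A : Set (Fin r →₀ ℕ)} {β : Fin r →₀ ℕ} {c : K} (hc : c ≠ 0) :
    MvPolynomial.monomial β c ∈ msp K A ↔ ∃ a ∈ A, a ≤ β := by
  classical
  rw [mem_msp_iff]
  constructor
  · intro h
    exact h β (by rw [MvPolynomial.support_monomial, if_neg hc]; exact Finset.mem_singleton_self _)
  · intro h α hα
    rw [MvPolynomial.support_monomial, if_neg hc, Finset.mem_singleton] at hα
    subst hα; exact h

/-- n-fold sumset -/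
def sumN (A : Set (Fin r →₀ ℕ)) : ℕ → Set (Fin r →₀ ℕ)
  | 0 => {0}
  | n + 1 => {x | ∃ a ∈ A, ∃ b ∈ sumN A n, x = a + b}

theorem msp_pow (A : Set (Fin r →₀ ℕ)) (n : ℕ) :
    (msp K A) ^ n = msp K (sumN A n) := by
  induction n with
  | zero =>
    rw [pow_zero, sumN]
    have : ((fun a : Fin r →₀ ℕ => MvPolynomial.monomial a (1 : K)) '' {0})
        = {(1 : MvPolynomial (Fin r) K)} := by
      ext p; simp [MvPolynomial.monomial_zero']
    rw [msp, this, Ideal.span_singleton_one, Ideal.one_eq_top]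
  | succ n ih =>
    rw [pow_succ, ih, msp, msp, msp, Ideal.span_mul_span]
    congr 1
    ext p
    simp only [Set.mem_iUnion, Set.mem_singleton_iff, Set.mem_image]
    constructor
    · rintro ⟨q, ⟨b, hb, rfl⟩, w, ⟨a, ha, rfl⟩, rfl⟩
      refine ⟨a + b, ⟨a, ha, b, hb, rfl⟩, ?_⟩
      beta_reduce
      rw [MvPolynomial.monomial_mul, one_mul, add_comm]
    · rintro ⟨x, ⟨a, ha, b, hb, rfl⟩, rfl⟩
      exact ⟨MvPolynomial.monomial b 1, ⟨b, hb, rfl⟩, MvPolynomial.monomial a 1, ⟨a, ha, rfl⟩,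
        by beta_reduce; rw [MvPolynomial.monomial_mul, one_mul, add_comm]⟩

theorem mem_sumN_iff {A : Set (Fin r →₀ ℕ)} {n : ℕ} {x : Fin r →₀ ℕ} :
    x ∈ sumN A n ↔ ∃ g : Fin n → (Fin r →₀ ℕ), (∀ i, g i ∈ A) ∧ x = ∑ i, g i := by
  induction n generalizing x with
  | zero =>
    simp only [sumN, Set.mem_singleton_iff]
    constructor
    · rintro rfl; exact ⟨![], fun i => i.elim0, by simp⟩
    · rintro ⟨g, _, rfl⟩; simp
  | succ n ih =>
    constructor
    · rintro ⟨a, ha, b, hb, rfl⟩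
      obtain ⟨g, hg, rfl⟩ := ih.1 hb
      refine ⟨Fin.cons a g, ?_, ?_⟩
      · intro i
        refine Fin.cases ?_ ?_ i
        · simpa using ha
        · intro j; simpa using hg j
      · rw [Fin.sum_cons]
    · rintro ⟨g, hg, rfl⟩
      refine ⟨g 0, hg 0, ∑ i : Fin n, g i.succ, ih.2 ⟨fun i => g i.succ, fun i => hg _, rfl⟩, ?_⟩
      rw [Fin.sum_univ_succ]


def IsMinCover (E : Set (Finset (Fin r))) (W : Finset (Fin r)) : Prop :=
  IsVertexCover E W ∧ ∀ W' ⊆ W, IsVertexCover E W' → W' = W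

/-- indicator exponent of a vertex set -/
noncomputable def τ {r : ℕ} (W : Finset (Fin r)) : Fin r →₀ ℕ := ∑ i ∈ W, Finsupp.single i 1

theorem τ_apply (W : Finset (Fin r)) (u : Fin r) : τ W u = if u ∈ W then 1 else 0 := by
  classical
  rw [τ, Finsupp.finset_sum_apply]
  simp only [Finsupp.single_apply]
  rw [Finset.sum_ite_eq' W u (fun _ => 1)]

theorem τ_mono {W W' : Finset (Fin r)} (h : W' ⊆ W) : τ W' ≤ τ W := by
  rw [Finsupp.le_def]
  intro u
  rw [τ_apply, τ_apply]
  by_cases hu : u ∈ W'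
  · rw [if_pos hu, if_pos (h hu)]
  · rw [if_neg hu]; positivity

theorem exists_minCover_subset {E : Set (Finset (Fin r))} :
    ∀ (W : Finset (Fin r)), IsVertexCover E W → ∃ W', W' ⊆ W ∧ IsMinCover E W' := by
  intro W
  induction W using Finset.strongInduction with
  | _ W ih =>
    intro hW
    by_cases h : ∀ W' ⊆ W, IsVertexCover E W' → W' = W
    · exact ⟨W, Finset.Subset.refl W, hW, h⟩
    · push_neg at h
      obtain ⟨W', hsub, hcov, hne⟩ := h
      have hss : W' ⊂ W := lt_of_le_of_ne hsub hne
      obtain ⟨W'', h1, h2⟩ := ih W' hss hcov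
      exact ⟨W'', h1.trans hsub, h2⟩

theorem prod_X_eq (W : Finset (Fin r)) :
    (∏ i ∈ W, (MvPolynomial.X i : MvPolynomial (Fin r) K)) = MvPolynomial.monomial (τ W) 1 := by
  classical
  induction W using Finset.induction with
  | empty => simp [τ, MvPolynomial.monomial_zero']
  | @insert a W ha ih =>
    rw [Finset.prod_insert ha, ih, MvPolynomial.X, MvPolynomial.monomial_mul, one_mul, τ, τ,
      Finset.sum_insert ha]

theorem coverIdeal_eq (E : Set (Finset (Fin r))) :
    coverIdeal K E = msp K (τ '' {W | IsMinCover E W}) := by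
  rw [coverIdeal, msp]
  congr 1
  ext p
  constructor
  · rintro ⟨W, h1, h2, rfl⟩
    exact ⟨τ W, ⟨W, ⟨h1, h2⟩, rfl⟩, (prod_X_eq W).symm⟩
  · rintro ⟨a, ⟨W, hW, rfl⟩, rfl⟩
    exact ⟨W, hW.1, hW.2, (prod_X_eq W).symm⟩

/-- domination by a sum of `n` cover indicators -/
def DomN (E : Set (Finset (Fin r))) (n : ℕ) (β : Fin r →₀ ℕ) : Prop :=
  ∃ g : Fin n → Finset (Fin r), (∀ i, IsVertexCover E (g i)) ∧ ∑ i, τ (g i) ≤ β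

theorem sumN_le_iff_DomN {E : Set (Finset (Fin r))} {n : ℕ} {β : Fin r →₀ ℕ} :
    (∃ a ∈ sumN (τ '' {W | IsMinCover E W}) n, a ≤ β) ↔ DomN E n β := by
  constructor
  · rintro ⟨a, ha, hle⟩
    obtain ⟨g, hg, rfl⟩ := mem_sumN_iff.1 ha
    choose W hW hτ using hg
    refine ⟨W, fun i => (hW i).1, ?_⟩
    calc ∑ i, τ (W i) = ∑ i, g i := by
          apply Finset.sum_congr rfl; intro i _; rw [hτ i]
      _ ≤ β := hle
  · rintro ⟨g, hg, hle⟩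
    choose W hWsub hWmin using fun i => exists_minCover_subset (g i) (hg i)
    refine ⟨∑ i, τ (W i), mem_sumN_iff.2 ⟨fun i => τ (W i), fun i => ⟨W i, hWmin i, rfl⟩, rfl⟩, ?_⟩
    exact le_trans (Finset.sum_le_sum fun i _ => τ_mono (hWsub i)) hle

theorem mem_pow_iff {E : Set (Finset (Fin r))} {n : ℕ} {f : MvPolynomial (Fin r) K} :
    f ∈ (coverIdeal K E) ^ n ↔ ∀ α ∈ f.support, DomN E n α := by
  rw [coverIdeal_eq, msp_pow, mem_msp_iff]
  constructor
  · intro h α hα; exact sumN_le_iff_DomN.1 (h α hα)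
  · intro h α hα; exact sumN_le_iff_DomN.2 (h α hα)

theorem monomial_mem_pow_iff {E : Set (Finset (Fin r))} {n : ℕ} {β : Fin r →₀ ℕ} {c : K}
    (hc : c ≠ 0) :
    MvPolynomial.monomial β c ∈ (coverIdeal K E) ^ n ↔ DomN E n β := by
  rw [coverIdeal_eq, msp_pow, monomial_mem_msp_iff hc, sumN_le_iff_DomN]



end FHVT
namespace FHVT2

open FHVT

variable {K : Type} [Field K] {r : ℕ}

def Colorable (t : ℕ) {r : ℕ} (E : Set (Finset (Fin r))) : Prop :=
  ∃ c : Fin r → Fin t, ∀ e ∈ E, ∀ i : Fin t, ¬ (∀ v ∈ e, c v = i)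

theorem hChromaticNumber_eq (E : Set (Finset (Fin r))) :
    hChromaticNumber E = sInf {t | Colorable t E} := rfl

theorem colorable_succ {t : ℕ} {E : Set (Finset (Fin r))} (hne : ∀ e ∈ E, e.Nonempty)
    (h : Colorable t E) : Colorable (t + 1) E := by
  obtain ⟨c, hc⟩ := h
  refine ⟨fun v => (c v).castSucc, ?_⟩
  intro e he i hall
  obtain ⟨v₀, hv₀⟩ := hne e he
  have hi : i = (c v₀).castSucc := (hall v₀ hv₀).symm
  apply hc e he (c v₀)
  intro v hv
  have h2 := hall v hv
  rw [hi] at h2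
  exact Fin.castSucc_injective _ h2

theorem colorable_mono {t t' : ℕ} {E : Set (Finset (Fin r))} (hne : ∀ e ∈ E, e.Nonempty)
    (h : Colorable t E) (htt' : t ≤ t') : Colorable t' E := by
  induction t', htt' using Nat.le_induction with
  | base => exact h
  | succ n _ ih => exact colorable_succ hne ih

theorem colorable_subset {t : ℕ} {E E' : Set (Finset (Fin r))} (hE : E' ⊆ E)
    (h : Colorable t E) : Colorable t E' := by
  obtain ⟨c, hc⟩ := h
  exact ⟨c, fun e he i => hc e (hE he) i⟩

theorem colorable_top {E : Set (Finset (Fin r))} (hcard : ∀ e ∈ E, 2 ≤ e.card) :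
    Colorable r E := by
  refine ⟨fun v => v, ?_⟩
  intro e he i hall
  obtain ⟨a, ha, b, hb, hab⟩ := Finset.one_lt_card.1 (hcard e he)
  exact hab ((hall a ha).trans (hall b hb).symm)

theorem chrom_le {t : ℕ} {E : Set (Finset (Fin r))} (h : Colorable t E) :
    hChromaticNumber E ≤ t := Nat.sInf_le h

theorem colorable_chrom {E : Set (Finset (Fin r))} (hcard : ∀ e ∈ E, 2 ≤ e.card) :
    Colorable (hChromaticNumber E) E := by
  rw [hChromaticNumber_eq]
  exact Nat.sInf_mem (⟨r, colorable_top hcard⟩ : {t | Colorable t E}.Nonempty)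

/-- the induced edge set on a vertex subset -/
def ES (E : Set (Finset (Fin r))) (S : Finset (Fin r)) : Set (Finset (Fin r)) :=
  {e ∈ E | e ⊆ S}

theorem ES_subset {E : Set (Finset (Fin r))} {S : Finset (Fin r)} : ES E S ⊆ E :=
  fun _ he => he.1

theorem ES_univ (E : Set (Finset (Fin r))) : ES E Finset.univ = E := by
  ext e; exact ⟨fun h => h.1, fun h => ⟨h, Finset.subset_univ e⟩⟩

theorem exists_critical {E : Set (Finset (Fin r))} {d : ℕ} (h : ¬ Colorable d E) :
    ∃ S : Finset (Fin r), ¬ Colorable d (ES E S) ∧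
      ∀ v ∈ S, Colorable d (ES E (S.erase v)) := by
  classical
  have hmem : Finset.univ ∈ Finset.univ.powerset.filter
      (fun S => ¬ Colorable d (ES E S)) := by
    rw [Finset.mem_filter]
    exact ⟨Finset.mem_powerset_self _, by rwa [ES_univ]⟩
  obtain ⟨S, hS, hmin⟩ := Finset.exists_min_image _ Finset.card ⟨_, hmem⟩
  refine ⟨S, (Finset.mem_filter.1 hS).2, ?_⟩
  intro v hv
  by_contra hcol
  have hmem2 : S.erase v ∈ Finset.univ.powerset.filter (fun S => ¬ Colorable d (ES E S)) := by
    rw [Finset.mem_filter]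
    exact ⟨Finset.mem_powerset.2 (Finset.subset_univ _), hcol⟩
  have := hmin _ hmem2
  have hlt := Finset.card_erase_lt_of_mem hv
  omega

theorem covers_of_coloring {E : Set (Finset (Fin r))} {t : ℕ} {S' : Finset (Fin r)}
    (c : Fin r → Fin t) (hc : ∀ e ∈ ES E S', ∀ i, ¬ (∀ v ∈ e, c v = i)) :
    ∃ g : Fin t → Finset (Fin r), (∀ i, IsVertexCover E (g i)) ∧
      (∀ u, (∑ i, τ (g i)) u ≤ t) ∧ (∀ u ∈ S', (∑ i, τ (g i)) u ≤ t - 1) := by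
  classical
  refine ⟨fun i => Finset.univ \ (S'.filter (fun v => c v = i)), ?_, ?_, ?_⟩
  · intro i e he
    by_contra hno
    push_neg at hno
    have hall : ∀ v ∈ e, v ∈ S' ∧ c v = i := by
      intro v hv
      have := hno v hv
      rw [Finset.mem_sdiff, not_and, not_not] at this
      exact Finset.mem_filter.1 (this (Finset.mem_univ v)) |>.imp id id
    exact hc e ⟨he, fun v hv => (hall v hv).1⟩ i (fun v hv => (hall v hv).2)
  · intro u
    rw [Finsupp.finset_sum_apply]
    calc ∑ i : Fin t, τ (Finset.univ \ S'.filter (fun v => c v = i)) u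
        ≤ ∑ _i : Fin t, 1 := by
          apply Finset.sum_le_sum
          intro i _
          rw [τ_apply]
          split <;> omega
      _ = t := by simp
  · intro u hu
    rw [Finsupp.finset_sum_apply]
    have hcu : τ (Finset.univ \ S'.filter (fun v => c v = c u)) u = 0 := by
      rw [τ_apply, if_neg]
      rw [Finset.mem_sdiff, not_and, not_not]
      intro _
      exact Finset.mem_filter.2 ⟨hu, rfl⟩
    rw [← Finset.sum_erase_add _ _ (Finset.mem_univ (c u)), hcu, add_zero]
    calc ∑ i ∈ Finset.univ.erase (c u), τ (Finset.univ \ S'.filter (fun v => c v = i)) u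
        ≤ ∑ _i ∈ Finset.univ.erase (c u), 1 := by
          apply Finset.sum_le_sum
          intro i _
          rw [τ_apply]
          split <;> omega
      _ = t - 1 := by
          rw [Finset.sum_const, smul_eq_mul, mul_one, Finset.card_erase_of_mem (Finset.mem_univ _),
            Finset.card_univ, Fintype.card_fin]

theorem coloring_of_covers {E : Set (Finset (Fin r))} {t : ℕ} {S' : Finset (Fin r)}
    (ht : 0 < t) (g : Fin t → Finset (Fin r)) (hg : ∀ i, IsVertexCover E (g i))
    (h : ∀ u ∈ S', ∃ i, u ∉ g i) : Colorable t (ES E S') := by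
  classical
  refine ⟨fun u => if hu : u ∈ S' then Classical.choose (h u hu) else ⟨0, ht⟩, ?_⟩
  rintro e ⟨he, hsub⟩ i hall
  obtain ⟨v, hv, hvg⟩ := hg i e he
  have := hall v hv
  dsimp only at this
  rw [dif_pos (hsub hv)] at this
  exact (this ▸ Classical.choose_spec (h v (hsub hv))) hvg

theorem coloring_of_covers' {E : Set (Finset (Fin r))} {t : ℕ} {S' : Finset (Fin r)}
    (hcard : ∀ e ∈ E, 2 ≤ e.card) (v₀ : Fin r)
    (g : Fin t → Finset (Fin r)) (hg : ∀ i, IsVertexCover E (g i))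
    (h : ∀ u ∈ S', u ≠ v₀ → ∃ i, u ∉ g i) : Colorable (t + 1) (ES E S') := by
  classical
  refine ⟨fun u => if hu : u ∈ S' ∧ u ≠ v₀ then (Classical.choose (h u hu.1 hu.2)).castSucc
    else Fin.last t, ?_⟩
  rintro e ⟨he, hsub⟩ i hall
  induction i using Fin.lastCases with
  | last =>
    have hsub1 : e ⊆ {v₀} := by
      intro v hv
      have := hall v hv
      dsimp only at this
      by_cases hcond : v ∈ S' ∧ v ≠ v₀
      · rw [dif_pos hcond] at this
        exact absurd this (Fin.castSucc_lt_last _).ne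
      · push_neg at hcond
        rw [Finset.mem_singleton]
        exact hcond (hsub hv)
    have := (hcard e he).trans (Finset.card_le_card hsub1)
    simp at this
  | cast j =>
    obtain ⟨v, hv, hvg⟩ := hg j e he
    have := hall v hv
    dsimp only at this
    have hcond : v ∈ S' ∧ v ≠ v₀ := by
      by_contra hc
      rw [dif_neg hc] at this
      exact absurd this.symm (Fin.castSucc_lt_last _).ne
    rw [dif_pos hcond] at this
    have hj := Fin.castSucc_injective _ this
    exact (hj ▸ Classical.choose_spec (h v hcond.1 hcond.2)) hvg

end FHVT2
namespace FHVT3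
open FHVT FHVT2 MvPolynomial

variable {K : Type} [Field K] {r : ℕ}

/-- the monomial prime generated by the variables in `S` -/
noncomputable def PT (K : Type) [Field K] {r : ℕ} (S : Finset (Fin r)) :
    Ideal (MvPolynomial (Fin r) K) :=
  msp K ((fun v => Finsupp.single v 1) '' ↑S)

theorem mem_PT_iff {S : Finset (Fin r)} {f : MvPolynomial (Fin r) K} :
    f ∈ PT K S ↔ ∀ α ∈ f.support, ∃ v ∈ S, 1 ≤ α v := by
  rw [PT, mem_msp_iff]
  constructor
  · intro h α hα
    obtain ⟨a, ⟨v, hv, rfl⟩, hle⟩ := h α hα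
    exact ⟨v, hv, by simpa using (Finsupp.le_def.1 hle) v⟩
  · intro h α hα
    obtain ⟨v, hv, h1⟩ := h α hα
    exact ⟨Finsupp.single v 1, ⟨v, hv, rfl⟩, Finsupp.single_le_iff.2 h1⟩

theorem X_mem_PT_iff {S : Finset (Fin r)} {v : Fin r} :
    (MvPolynomial.X v : MvPolynomial (Fin r) K) ∈ PT K S ↔ v ∈ S := by
  classical
  rw [MvPolynomial.X, mem_PT_iff]
  constructor
  · intro h
    obtain ⟨u, hu, h1⟩ := h (Finsupp.single v 1)
      (by rw [MvPolynomial.support_monomial, if_neg one_ne_zero]; exact Finset.mem_singleton_self _)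
    rw [Finsupp.single_apply] at h1
    by_cases huv : v = u
    · exact huv ▸ hu
    · rw [if_neg huv] at h1; omega
  · intro hv α hα
    rw [MvPolynomial.support_monomial, if_neg one_ne_zero, Finset.mem_singleton] at hα
    exact ⟨v, hv, by rw [hα, Finsupp.single_apply, if_pos rfl]⟩

theorem PT_prime (S : Finset (Fin r)) : (PT K S).IsPrime := by
  classical
  have hker : RingHom.ker (MvPolynomial.aeval
      (fun i => if i ∈ S then (0 : MvPolynomial (Fin r) K) else MvPolynomial.X i)
        : MvPolynomial (Fin r) K →ₐ[K] MvPolynomial (Fin r) K).toRingHom = PT K S := by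
    ext f
    rw [RingHom.mem_ker]
    simp only [AlgHom.toRingHom_eq_coe, RingHom.coe_coe]
    constructor
    · intro hf
      rw [mem_PT_iff]
      by_contra hno
      push_neg at hno
      obtain ⟨α₀, hα₀, hfree⟩ := hno
      apply absurd (congrArg (MvPolynomial.coeff α₀) hf)
      have hev : (MvPolynomial.aeval
          (fun i => if i ∈ S then (0 : MvPolynomial (Fin r) K) else MvPolynomial.X i)) f
          = ∑ α ∈ f.support.filter (fun α => ∀ v ∈ S, α v = 0),
              MvPolynomial.monomial α (MvPolynomial.coeff α f) := by
        conv_lhs => rw [MvPolynomial.as_sum f]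
        rw [map_sum, ← Finset.sum_filter_add_sum_filter_not f.support
          (fun α => ∀ v ∈ S, α v = 0)]
        have h1 : ∀ α ∈ f.support.filter (fun α => ∀ v ∈ S, α v = 0),
            (MvPolynomial.aeval fun i => if i ∈ S then (0 : MvPolynomial (Fin r) K)
              else MvPolynomial.X i) (MvPolynomial.monomial α (MvPolynomial.coeff α f))
            = MvPolynomial.monomial α (MvPolynomial.coeff α f) := by
          intro α hα
          rw [Finset.mem_filter] at hα
          rw [MvPolynomial.aeval_monomial]
          have : ∀ v ∈ α.support, (if v ∈ S then (0 : MvPolynomial (Fin r) K)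
              else MvPolynomial.X v) ^ α v = MvPolynomial.X v ^ α v := by
            intro v hv
            have : v ∉ S := by
              intro hvS
              exact absurd (hα.2 v hvS) (Finsupp.mem_support_iff.1 hv)
            rw [if_neg this]
          rw [Finsupp.prod_congr this]
          rw [MvPolynomial.monomial_eq]
          rfl
        have h2 : ∀ α ∈ f.support.filter (fun α => ¬ ∀ v ∈ S, α v = 0),
            (MvPolynomial.aeval fun i => if i ∈ S then (0 : MvPolynomial (Fin r) K)
              else MvPolynomial.X i) (MvPolynomial.monomial α (MvPolynomial.coeff α f)) = 0 := by
          intro α hα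
          rw [Finset.mem_filter] at hα
          push_neg at hα
          obtain ⟨v, hvS, hv⟩ := hα.2
          rw [MvPolynomial.aeval_monomial]
          have hvsupp : v ∈ α.support := Finsupp.mem_support_iff.2 hv
          rw [Finsupp.prod, Finset.prod_eq_zero hvsupp, mul_zero]
          rw [if_pos hvS]
          exact zero_pow hv
        rw [Finset.sum_congr rfl h1, Finset.sum_congr rfl h2, Finset.sum_const_zero, add_zero]
      rw [hev, MvPolynomial.coeff_zero]
      rw [MvPolynomial.coeff_sum]
      rw [Finset.sum_eq_single α₀]
      · rw [MvPolynomial.coeff_monomial, if_pos rfl]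
        exact MvPolynomial.mem_support_iff.1 hα₀
      · intro β hβ hne
        rw [MvPolynomial.coeff_monomial, if_neg hne]
      · intro hα₀'
        rw [Finset.mem_filter] at hα₀'
        push_neg at hα₀'
        obtain ⟨v, hv, hne⟩ := hα₀' hα₀
        exact absurd (Nat.lt_one_iff.1 (hfree v hv)) hne
    · intro hf
      have hle : PT K S ≤ RingHom.ker (MvPolynomial.aeval
          (fun i => if i ∈ S then (0 : MvPolynomial (Fin r) K) else MvPolynomial.X i)
            : MvPolynomial (Fin r) K →ₐ[K] MvPolynomial (Fin r) K).toRingHom := by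
        rw [PT, msp, Ideal.span_le]
        rintro p ⟨a, ⟨v, hv, rfl⟩, rfl⟩
        have hx : (MvPolynomial.monomial (Finsupp.single v 1) (1:K)) = MvPolynomial.X v := rfl
        rw [SetLike.mem_coe, RingHom.mem_ker]
        simp only [AlgHom.toRingHom_eq_coe, RingHom.coe_coe]
        show (MvPolynomial.aeval fun i => if i ∈ S then (0 : MvPolynomial (Fin r) K)
          else MvPolynomial.X i) (MvPolynomial.monomial (Finsupp.single v 1) (1:K)) = 0
        rw [hx, MvPolynomial.aeval_X, if_pos (by exact_mod_cast hv)]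
      exact hle hf
  rw [← hker]
  exact RingHom.ker_isPrime _

theorem sum_tau_apply {n : ℕ} (g : Fin n → Finset (Fin r)) (u : Fin r) :
    (∑ i, τ (g i)) u = ∑ i, (if u ∈ g i then 1 else 0) := by
  rw [Finsupp.finset_sum_apply]
  exact Finset.sum_congr rfl fun i _ => τ_apply _ _

theorem sum_tau_le {n : ℕ} (g : Fin n → Finset (Fin r)) (u : Fin r) :
    (∑ i, τ (g i)) u ≤ n := by
  rw [sum_tau_apply]
  calc ∑ i : Fin n, (if u ∈ g i then 1 else 0) ≤ ∑ _i : Fin n, 1 :=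
        Finset.sum_le_sum (fun i _ => by split <;> omega)
    _ = n := by simp

theorem exists_not_mem_of_lt {n : ℕ} {g : Fin n → Finset (Fin r)} {u : Fin r}
    (h : (∑ i, τ (g i)) u < n) : ∃ i, u ∉ g i := by
  by_contra hno
  push_neg at hno
  rw [sum_tau_apply] at h
  have : ∑ i : Fin n, (if u ∈ g i then 1 else 0) = ∑ _i : Fin n, 1 :=
    Finset.sum_congr rfl fun i _ => if_pos (hno i)
  simp only [this, Finset.sum_const, smul_eq_mul, mul_one, Finset.card_univ,
    Fintype.card_fin] at h
  omega

/-- the witness exponent vector -/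
noncomputable def βS (S : Finset (Fin r)) (d : ℕ) : Fin r →₀ ℕ :=
  Finsupp.equivFunOnFinite.symm (fun u => if u ∈ S then d - 1 else d)

theorem βS_apply (S : Finset (Fin r)) (d : ℕ) (u : Fin r) :
    βS S d u = if u ∈ S then d - 1 else d := rfl

theorem support_mul_monomial {q : MvPolynomial (Fin r) K} {β α : Fin r →₀ ℕ}
    (hα : α ∈ (q * MvPolynomial.monomial β 1).support) : ∃ γ ∈ q.support, α = γ + β := by
  classical
  have := MvPolynomial.support_mul q (MvPolynomial.monomial β (1:K)) hα
  rw [MvPolynomial.support_monomial, if_neg one_ne_zero] at this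
  obtain ⟨γ, hγ, b, hb, rfl⟩ := Finset.mem_add.1 this
  rw [Finset.mem_singleton] at hb
  exact ⟨γ, hγ, by rw [hb]⟩

/-- key construction: for a critical `S`, `P_S` is an associated prime of `R/J^d`. -/
theorem PT_isAssociated {E : Set (Finset (Fin r))} {d : ℕ} (hd : 0 < d) {S : Finset (Fin r)}
    (hS : ¬ Colorable d (ES E S)) (hScrit : ∀ v ∈ S, Colorable d (ES E (S.erase v))) :
    IsAssociatedPrime (PT K S) ((MvPolynomial (Fin r) K) ⧸ (coverIdeal K E) ^ d) := by
  refine isAssociatedPrime_iff.2 ⟨PT_prime S, ⟨Ideal.Quotient.mk _ (MvPolynomial.monomial (βS S d) 1), ?_⟩⟩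
  ext q
  rw [Submodule.mem_colon_singleton, Submodule.mem_bot]
  have hsm : q • (Ideal.Quotient.mk ((coverIdeal K E)^d) (MvPolynomial.monomial (βS S d) 1))
      = Ideal.Quotient.mk _ (q * MvPolynomial.monomial (βS S d) 1) := rfl
  rw [hsm, Ideal.Quotient.eq_zero_iff_mem]
  constructor
  · -- q ∈ P_S → q·m ∈ J^d
    intro hq
    rw [mem_pow_iff]
    intro α hα
    obtain ⟨γ, hγ, rfl⟩ := support_mul_monomial hα
    obtain ⟨v, hv, hγv⟩ := mem_PT_iff.1 hq γ hγ
    obtain ⟨c, hc⟩ := hScrit v hv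
    obtain ⟨g, hgcov, hb1, hb2⟩ := covers_of_coloring c hc
    refine ⟨g, hgcov, Finsupp.le_def.2 fun u => ?_⟩
    rw [Finsupp.add_apply, βS_apply]
    by_cases huv : u = v
    · subst huv
      have := hb1 u
      rw [if_pos hv]
      omega
    · by_cases huS : u ∈ S
      · have := hb2 u (Finset.mem_erase.2 ⟨huv, huS⟩)
        rw [if_pos huS]
        omega
      · have := hb1 u
        rw [if_neg huS]
        omega
  · -- q·m ∈ J^d → q ∈ P_S
    intro hq
    by_contra hno
    rw [mem_PT_iff] at hno
    push_neg at hno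
    obtain ⟨γ₀, hγ₀, hfree⟩ := hno
    have hco : MvPolynomial.coeff (γ₀ + βS S d) (q * MvPolynomial.monomial (βS S d) 1)
        = MvPolynomial.coeff γ₀ q := by
      rw [MvPolynomial.coeff_mul_monomial, mul_one]
    have hdom := mem_pow_iff.1 hq (γ₀ + βS S d)
      (by rw [MvPolynomial.mem_support_iff, hco]; exact MvPolynomial.mem_support_iff.1 hγ₀)
    obtain ⟨g, hgcov, hgle⟩ := hdom
    apply hS
    apply coloring_of_covers hd g hgcov
    intro u hu
    apply exists_not_mem_of_lt
    have h1 := Finsupp.le_def.1 hgle u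
    rw [Finsupp.add_apply, βS_apply, if_pos hu] at h1
    have h0 : γ₀ u < 1 := hfree u hu
    omega

/-- extraction: an associated prime `P_S` at power `s` yields an `(s+1)`-coloring of `E_S`. -/
theorem colorable_of_isAssociated {E : Set (Finset (Fin r))} (hcard : ∀ e ∈ E, 2 ≤ e.card)
    {s : ℕ} {S : Finset (Fin r)} (hSne : S.Nonempty)
    (h : IsAssociatedPrime (PT K S) ((MvPolynomial (Fin r) K) ⧸ (coverIdeal K E) ^ s)) :
    Colorable (s + 1) (ES E S) := by
  obtain ⟨hp, x, hx⟩ := isAssociatedPrime_iff.1 h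
  obtain ⟨f, rfl⟩ := Ideal.Quotient.mk_surjective x
  have hfnot : f ∉ (coverIdeal K E) ^ s := by
    intro hf
    have h0 : Ideal.Quotient.mk ((coverIdeal K E)^s) f = 0 := Ideal.Quotient.eq_zero_iff_mem.2 hf
    rw [h0] at hx
    apply hp.ne_top
    rw [hx, eq_top_iff]; intro a _; rw [Submodule.mem_colon_singleton, smul_zero]; exact Submodule.zero_mem _
  obtain ⟨γ₀, hγ₀, hγdom⟩ : ∃ γ₀ ∈ f.support, ¬ DomN E s γ₀ := by
    by_contra hno
    push_neg at hno
    exact hfnot (mem_pow_iff.2 fun α hα => hno α hα)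
  have hXv : ∀ v ∈ S, DomN E s (γ₀ + Finsupp.single v 1) := by
    intro v hv
    have hXann : (MvPolynomial.X v : MvPolynomial (Fin r) K) •
        (Ideal.Quotient.mk ((coverIdeal K E)^s) f) = 0 := by
      have h' := hx ▸ (X_mem_PT_iff (K := K)).2 hv
      rwa [Submodule.mem_colon_singleton, Submodule.mem_bot] at h'
    have hXf : (MvPolynomial.X v : MvPolynomial (Fin r) K) * f ∈ (coverIdeal K E) ^ s := by
      rwa [← Ideal.Quotient.eq_zero_iff_mem]
    have hco : MvPolynomial.coeff (γ₀ + Finsupp.single v 1)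
        ((MvPolynomial.X v : MvPolynomial (Fin r) K) * f) = MvPolynomial.coeff γ₀ f := by
      rw [mul_comm, MvPolynomial.X, MvPolynomial.coeff_mul_monomial, mul_one]
    exact mem_pow_iff.1 hXf (γ₀ + Finsupp.single v 1)
      (by rw [MvPolynomial.mem_support_iff, hco]; exact MvPolynomial.mem_support_iff.1 hγ₀)
  have hbound : ∀ u ∈ S, γ₀ u + 1 ≤ s := by
    intro u hu
    obtain ⟨g, hgcov, hgle⟩ := hXv u hu
    have hnotall : ¬ (∑ i, τ (g i)) ≤ γ₀ := fun hle => hγdom ⟨g, hgcov, hle⟩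
    rw [Finsupp.le_def] at hnotall
    push_neg at hnotall
    obtain ⟨w, hw⟩ := hnotall
    have hwle := Finsupp.le_def.1 hgle w
    rw [Finsupp.add_apply, Finsupp.single_apply] at hwle
    by_cases hwu : u = w
    · subst hwu
      have := sum_tau_le g u
      rw [if_pos rfl] at hwle
      omega
    · rw [if_neg hwu] at hwle
      omega
  obtain ⟨v₀, hv₀⟩ := hSne
  obtain ⟨g, hgcov, hgle⟩ := hXv v₀ hv₀
  apply coloring_of_covers' hcard v₀ g hgcov
  intro u hu hne
  apply exists_not_mem_of_lt
  have h1 := Finsupp.le_def.1 hgle u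
  rw [Finsupp.add_apply, Finsupp.single_apply,
    if_neg (show ¬ v₀ = u from fun hh => hne (by rw [hh]))] at h1
  have h2 := hbound u hu
  omega

end FHVT3
namespace FHVT4
open FHVT FHVT2 FHVT3 MvPolynomial

variable {K : Type} [Field K] {r : ℕ}

theorem coeff_mul_min {p q : MvPolynomial (Fin r) K} {κ₀ δ₀ : Fin r →₀ ℕ}
    (hκ : ∀ κ ∈ p.support, toLex κ₀ ≤ toLex κ) (hδ : ∀ δ ∈ q.support, toLex δ₀ ≤ toLex δ) :
    MvPolynomial.coeff (κ₀ + δ₀) (p * q)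
      = MvPolynomial.coeff κ₀ p * MvPolynomial.coeff δ₀ q := by
  classical
  rw [MvPolynomial.coeff_mul]
  have h₀ : ∀ b ∈ Finset.HasAntidiagonal.antidiagonal (κ₀ + δ₀), b ≠ (κ₀, δ₀) →
      MvPolynomial.coeff b.1 p * MvPolynomial.coeff b.2 q = 0 := by
    rintro ⟨a, b⟩ hab hne
    rw [Finset.HasAntidiagonal.mem_antidiagonal] at hab
    by_cases ha : MvPolynomial.coeff a p = 0
    · rw [ha, zero_mul]
    by_cases hb : MvPolynomial.coeff b q = 0
    · rw [hb, mul_zero]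
    exfalso
    have h1 := hκ a (MvPolynomial.mem_support_iff.2 ha)
    have h2 := hδ b (MvPolynomial.mem_support_iff.2 hb)
    have hab' : toLex a + toLex b = toLex κ₀ + toLex δ₀ := by
      exact_mod_cast congrArg toLex hab
    have h3 : toLex a = toLex κ₀ := by
      rcases lt_or_eq_of_le h1 with h | h
      · exfalso
        have := add_lt_add_of_lt_of_le h h2
        rw [hab'] at this
        exact lt_irrefl _ this
      · exact h.symm
    have h4 : a = κ₀ := toLex.injective h3
    subst h4
    have h5 : b = δ₀ := by
      have := add_left_cancel hab
      exact this
    exact hne (by rw [h5])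
  exact Finset.sum_eq_single_of_mem (κ₀, δ₀) (Finset.HasAntidiagonal.mem_antidiagonal.2 rfl) h₀

/-- monomial-closed ideal -/
def MonClosed (I : Ideal (MvPolynomial (Fin r) K)) : Prop :=
  ∀ f ∈ I, ∀ α ∈ f.support, MvPolynomial.monomial α (1 : K) ∈ I

theorem msp_monClosed (A : Set (Fin r →₀ ℕ)) : MonClosed (msp K A) := by
  intro f hf α hα
  rw [monomial_mem_msp_iff one_ne_zero]
  exact mem_msp_iff.1 hf α hα

theorem keyL {I : Ideal (MvPolynomial (Fin r) K)} (hmc : MonClosed I)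
    {p : MvPolynomial (Fin r) K} {κ₀ : Fin r →₀ ℕ}
    (hκmem : κ₀ ∈ p.support) (hκmin : ∀ κ ∈ p.support, toLex κ₀ ≤ toLex κ) :
    ∀ t : ℕ, ∀ gg : MvPolynomial (Fin r) K, gg.support.card ≤ t → p * gg ∈ I →
      (MvPolynomial.monomial κ₀ (1:K)) ^ t * gg ∈ I := by
  classical
  intro t
  induction t with
  | zero =>
    intro gg hcard hmem
    have : gg = 0 := by
      rw [← MvPolynomial.support_eq_empty, ← Finset.card_eq_zero]
      omega
    rw [this, mul_zero]
    exact Ideal.zero_mem I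
  | succ t ih =>
    intro gg hcard hmem
    by_cases hgg : gg = 0
    · rw [hgg, mul_zero]; exact Ideal.zero_mem I
    -- minimal exponent of gg
    obtain ⟨δ₀, hδ₀mem, hδ₀min⟩ := Finset.exists_min_image gg.support toLex
      (MvPolynomial.support_nonempty.2 hgg)
    -- the minimal monomial of p * gg is in I
    have hcoeff : MvPolynomial.coeff (κ₀ + δ₀) (p * gg)
        = MvPolynomial.coeff κ₀ p * MvPolynomial.coeff δ₀ gg := coeff_mul_min hκmin hδ₀min
    have hne : MvPolynomial.coeff (κ₀ + δ₀) (p * gg) ≠ 0 := by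
      rw [hcoeff]
      exact mul_ne_zero (MvPolynomial.mem_support_iff.1 hκmem)
        (MvPolynomial.mem_support_iff.1 hδ₀mem)
    have hmono : MvPolynomial.monomial (κ₀ + δ₀) (1:K) ∈ I :=
      hmc _ hmem _ (MvPolynomial.mem_support_iff.2 hne)
    -- strip the lowest monomial
    set c := MvPolynomial.coeff δ₀ gg with hc
    set gg' := MvPolynomial.monomial κ₀ (1:K) * gg - MvPolynomial.monomial (κ₀ + δ₀) c with hgg'
    have hsupp' : gg'.support ⊆ ((gg.support.image (fun δ => κ₀ + δ)).erase (κ₀ + δ₀)) := by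
      intro γ hγ
      have hγne : MvPolynomial.coeff γ gg' ≠ 0 := MvPolynomial.mem_support_iff.1 hγ
      rw [hgg', MvPolynomial.coeff_sub] at hγne
      by_cases hγeq : γ = κ₀ + δ₀
      · exfalso
        apply hγne
        rw [hγeq, MvPolynomial.coeff_monomial_mul, MvPolynomial.coeff_monomial, if_pos rfl,
          one_mul, hc, sub_self]
      · rw [Finset.mem_erase]
        refine ⟨hγeq, ?_⟩
        rw [MvPolynomial.coeff_monomial, if_neg (fun h => hγeq h.symm), sub_zero] at hγne
        have := MvPolynomial.support_mul (MvPolynomial.monomial κ₀ (1:K)) gg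
          (MvPolynomial.mem_support_iff.2 hγne)
        rw [MvPolynomial.support_monomial, if_neg one_ne_zero] at this
        obtain ⟨a, ha, b, hb, rfl⟩ := Finset.mem_add.1 this
        rw [Finset.mem_singleton] at ha
        subst ha
        exact Finset.mem_image.2 ⟨b, hb, rfl⟩
    have hcard' : gg'.support.card ≤ t := by
      have h1 := Finset.card_le_card hsupp'
      have h2 : (gg.support.image (fun δ => κ₀ + δ)).card = gg.support.card :=
        Finset.card_image_of_injective _ (add_right_injective κ₀)
      have h3 : κ₀ + δ₀ ∈ gg.support.image (fun δ => κ₀ + δ) :=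
        Finset.mem_image.2 ⟨δ₀, hδ₀mem, rfl⟩
      rw [Finset.card_erase_of_mem h3, h2] at h1
      omega
    have hmem' : p * gg' ∈ I := by
      rw [hgg', mul_sub]
      apply Ideal.sub_mem
      · rw [show p * (MvPolynomial.monomial κ₀ (1:K) * gg)
          = MvPolynomial.monomial κ₀ (1:K) * (p * gg) by ring]
        exact Ideal.mul_mem_left I _ hmem
      · have : (MvPolynomial.monomial (κ₀ + δ₀) c : MvPolynomial (Fin r) K)
            = MvPolynomial.C c * MvPolynomial.monomial (κ₀ + δ₀) 1 := by
          rw [MvPolynomial.C_mul_monomial, mul_one]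
        rw [this]
        rw [show p * (MvPolynomial.C c * MvPolynomial.monomial (κ₀ + δ₀) 1)
          = (p * MvPolynomial.C c) * MvPolynomial.monomial (κ₀ + δ₀) 1 by ring]
        exact Ideal.mul_mem_left I _ hmono
    have hfin := ih gg' hcard' hmem'
    have : (MvPolynomial.monomial κ₀ (1:K)) ^ (t+1) * gg
        = (MvPolynomial.monomial κ₀ (1:K)) ^ t * gg'
          + (MvPolynomial.monomial κ₀ (1:K)) ^ t * MvPolynomial.monomial (κ₀ + δ₀) c := by
      rw [hgg']
      ring
    rw [this]
    apply Ideal.add_mem I hfin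
    have hm : (MvPolynomial.monomial (κ₀ + δ₀) c : MvPolynomial (Fin r) K)
        = MvPolynomial.C c * MvPolynomial.monomial (κ₀ + δ₀) 1 := by
      rw [MvPolynomial.C_mul_monomial, mul_one]
    rw [hm, show (MvPolynomial.monomial κ₀ (1:K)) ^ t *
      (MvPolynomial.C c * MvPolynomial.monomial (κ₀ + δ₀) 1)
      = ((MvPolynomial.monomial κ₀ (1:K)) ^ t * MvPolynomial.C c)
        * MvPolynomial.monomial (κ₀ + δ₀) 1 by ring]
    exact Ideal.mul_mem_left I _ hmono

theorem monClosed_ann {I P : Ideal (MvPolynomial (Fin r) K)} (hmc : MonClosed I)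
    (hP : P.IsPrime) (g : MvPolynomial (Fin r) K)
    (hann : ∀ q, q ∈ P ↔ q * g ∈ I) :
    ∀ p ∈ P, ∀ κ ∈ p.support, MvPolynomial.monomial κ (1:K) ∈ P := by
  classical
  have main : ∀ n : ℕ, ∀ p ∈ P, p.support.card ≤ n →
      ∀ κ ∈ p.support, MvPolynomial.monomial κ (1:K) ∈ P := by
    intro n
    induction n with
    | zero =>
      intro p _ hcard κ hκ
      rw [Finset.card_eq_zero.1 (Nat.le_zero.1 hcard)] at hκ
      exact absurd hκ (Finset.notMem_empty κ)
    | succ n ih =>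
      intro p hp hcard κ hκ
      obtain ⟨κ₀, hκ₀mem, hκ₀min⟩ := Finset.exists_min_image p.support toLex ⟨κ, hκ⟩
      have hκ₀P : MvPolynomial.monomial κ₀ (1:K) ∈ P := by
        apply hP.mem_of_pow_mem g.support.card
        rw [hann]
        exact keyL hmc hκ₀mem hκ₀min g.support.card g le_rfl ((hann p).1 hp)
      by_cases hκeq : κ = κ₀
      · rw [hκeq]; exact hκ₀P
      · set p' := p - MvPolynomial.monomial κ₀ (MvPolynomial.coeff κ₀ p) with hp'
        have hp'P : p' ∈ P := by
          apply Ideal.sub_mem P hp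
          rw [show (MvPolynomial.monomial κ₀ (MvPolynomial.coeff κ₀ p) :
            MvPolynomial (Fin r) K) = MvPolynomial.C (MvPolynomial.coeff κ₀ p)
              * MvPolynomial.monomial κ₀ 1 by rw [MvPolynomial.C_mul_monomial, mul_one]]
          exact Ideal.mul_mem_left P _ hκ₀P
        have hsupp' : p'.support ⊆ p.support.erase κ₀ := by
          intro γ hγ
          have hγne := MvPolynomial.mem_support_iff.1 hγ
          rw [hp', MvPolynomial.coeff_sub, MvPolynomial.coeff_monomial] at hγne
          rw [Finset.mem_erase]
          by_cases hγκ : γ = κ₀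
          · exfalso; apply hγne; rw [if_pos hγκ.symm, hγκ, sub_self]
          · rw [if_neg (fun h => hγκ h.symm), sub_zero] at hγne
            exact ⟨hγκ, MvPolynomial.mem_support_iff.2 hγne⟩
        have hκp' : κ ∈ p'.support := by
          rw [MvPolynomial.mem_support_iff, hp', MvPolynomial.coeff_sub,
            MvPolynomial.coeff_monomial, if_neg (fun h => hκeq h.symm), sub_zero]
          exact MvPolynomial.mem_support_iff.1 hκ
        apply ih p' hp'P _ κ hκp'
        have := Finset.card_le_card hsupp'
        rw [Finset.card_erase_of_mem hκ₀mem] at this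
        omega
  intro p hp κ hκ
  exact main p.support.card p hp le_rfl κ hκ

/-- associated primes of monomial ideals are generated by variables -/
theorem ass_msp {A : Set (Fin r →₀ ℕ)} {P : Ideal (MvPolynomial (Fin r) K)}
    (h : IsAssociatedPrime P ((MvPolynomial (Fin r) K) ⧸ msp K A)) :
    ∃ T : Finset (Fin r), P = PT K T := by
  classical
  obtain ⟨hP, x, hx⟩ := isAssociatedPrime_iff.1 h
  obtain ⟨g, rfl⟩ := Ideal.Quotient.mk_surjective x
  have hann : ∀ q, q ∈ P ↔ q * g ∈ msp K A := by
    intro q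
    rw [hx, Submodule.mem_colon_singleton, Submodule.mem_bot]
    have : q • (Ideal.Quotient.mk (msp K A) g) = Ideal.Quotient.mk _ (q * g) := rfl
    rw [this, Ideal.Quotient.eq_zero_iff_mem]
  refine ⟨Finset.univ.filter (fun v => (MvPolynomial.X v : MvPolynomial (Fin r) K) ∈ P), ?_⟩
  apply le_antisymm
  · -- P ≤ PT T
    intro p hp
    rw [mem_PT_iff]
    intro α hα
    have hmono : MvPolynomial.monomial α (1:K) ∈ P :=
      monClosed_ann (msp_monClosed A) hP g hann p hp α hα
    -- find a variable in P dividing x^α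
    have : ∃ v, 1 ≤ α v ∧ (MvPolynomial.X v : MvPolynomial (Fin r) K) ∈ P := by
      by_contra hno
      push_neg at hno
      -- then x^α = ∏ X v ^ α v with each factor ∉ P
      have hprod : (MvPolynomial.monomial α (1:K))
          = ∏ v ∈ α.support, (MvPolynomial.X v : MvPolynomial (Fin r) K) ^ α v := by
        rw [MvPolynomial.monomial_eq, MvPolynomial.C_1, one_mul]
        rfl
      rw [hprod] at hmono
      -- prime: some factor in P
      have : ∃ v ∈ α.support, (MvPolynomial.X v : MvPolynomial (Fin r) K) ^ α v ∈ P := by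
        haveI := hP
        exact Ideal.IsPrime.prod_mem_iff.1 hmono
      obtain ⟨v, hv, hpow⟩ := this
      have hXv := hP.mem_of_pow_mem _ hpow
      exact hno v (by
        have := Finsupp.mem_support_iff.1 hv
        omega) hXv
    obtain ⟨v, h1, h2⟩ := this
    exact ⟨v, Finset.mem_filter.2 ⟨Finset.mem_univ v, h2⟩, h1⟩
  · -- PT T ≤ P
    rw [PT, msp, Ideal.span_le]
    rintro q ⟨a, ⟨v, hv, rfl⟩, rfl⟩
    rw [Finset.coe_filter] at hv
    rw [SetLike.mem_coe,
      show (fun a : Fin r →₀ ℕ => (MvPolynomial.monomial a) (1:K)) ((fun v => Finsupp.single v 1) v)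
        = MvPolynomial.X v from rfl]
    exact hv.2

end FHVT4
namespace FHVT5

open Polynomial

set_option synthInstance.maxHeartbeats 1000000 in
set_option maxHeartbeats 1000000 in
/-- Elementary McAdam–Eakin-type lemma via the Rees algebra: for `n` large,
`(J^{n+2} : J) ∩ J^n ⊆ J^{n+1}`. -/
theorem kernel_vanishes {R : Type} [CommRing R] [IsNoetherianRing R] (J : Ideal R) :
    ∃ N : ℕ, ∀ n, N ≤ n → ∀ m, m ∈ J ^ n → (∀ u ∈ J, m * u ∈ J ^ (n + 2)) → m ∈ J ^ (n + 1) := by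
  classical
  let G : ℕ → Set ↥(reesAlgebra J) := fun N =>
    {x | ∃ n, n ≤ N ∧ ∃ m, (m ∈ J ^ n ∧ ∀ u ∈ J, m * u ∈ J ^ (n + 2)) ∧
      (x : Polynomial R) = Polynomial.monomial n m}
  have hGmono : Monotone G := by
    intro a b hab x hx
    obtain ⟨n, hn, hm⟩ := hx
    exact ⟨n, hn.trans hab, hm⟩
  let c : ℕ →o Ideal ↥(reesAlgebra J) :=
    ⟨fun N => Ideal.span (G N), fun a b hab => Ideal.span_mono (hGmono hab)⟩
  obtain ⟨N₀, hN₀⟩ := (monotone_stabilizes_iff_noetherian.2 inferInstance) c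
  refine ⟨N₀ + 1, fun n hn m hm hmu => ?_⟩
  have hxmem : (⟨Polynomial.monomial n m, reesAlgebra.monomial_mem.2 hm⟩ : ↥(reesAlgebra J))
      ∈ c n := Ideal.subset_span ⟨n, le_rfl, m, ⟨hm, hmu⟩, rfl⟩
  rw [← hN₀ n (by omega)] at hxmem
  obtain ⟨l, hlsupp, hlsum⟩ := Submodule.mem_span_set.1 hxmem
  have hval := congrArg (fun y : ↥(reesAlgebra J) => Polynomial.coeff (y : Polynomial R) n) hlsum
  simp only at hval
  rw [Polynomial.coeff_monomial, if_pos rfl] at hval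
  rw [← hval]
  have hcoe : ((l.sum fun (mi r : ↥(reesAlgebra J)) => r • mi : ↥(reesAlgebra J)) : Polynomial R)
      = ∑ mi ∈ l.support, ((l mi : Polynomial R) * (mi : Polynomial R)) := by
    rw [Finsupp.sum, AddSubmonoidClass.coe_finset_sum]
    apply Finset.sum_congr rfl
    intro mi _
    rfl
  rw [hcoe, Polynomial.finset_sum_coeff]
  apply Ideal.sum_mem
  intro mi hmi
  have hgen := hlsupp hmi
  obtain ⟨d, hd, w, ⟨hw1, hw2⟩, hvaleq⟩ := hgen
  have hρ : ∀ i, ((l mi : ↥(reesAlgebra J)) : Polynomial R).coeff i ∈ J ^ i := (l mi).2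
  have hcoeff : (((l mi : ↥(reesAlgebra J)) : Polynomial R) * (mi : Polynomial R)).coeff n
      = ((l mi : ↥(reesAlgebra J)) : Polynomial R).coeff (n - d) * w := by
    rw [hvaleq]
    have hnd : n = (n - d) + d := by omega
    conv_lhs => rw [hnd]
    rw [Polynomial.coeff_mul_monomial]
  rw [hcoeff]
  -- now a * w ∈ J^{n+1} with a ∈ J^{n-d}, w ∈ (J^{d+2} : J)
  have hJw : J * Ideal.span {w} ≤ J ^ (d + 2) := by
    rw [Ideal.mul_le]
    intro u hu s hs
    obtain ⟨t, rfl⟩ := Ideal.mem_span_singleton'.1 hs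
    rw [show u * (t * w) = t * (w * u) by ring]
    exact Ideal.mul_mem_left _ _ (hw2 u hu)
  have hle : J ^ (n - d) * Ideal.span {w} ≤ J ^ (n + 1) := by
    have hnd : n - d = (n - d - 1) + 1 := by omega
    rw [hnd, pow_succ, mul_assoc]
    calc J ^ (n - d - 1) * (J * Ideal.span {w}) ≤ J ^ (n - d - 1) * J ^ (d + 2) :=
          Ideal.mul_mono_right hJw
      _ = J ^ (n + 1) := by rw [← pow_add]; congr 1; omega
  exact hle (Ideal.mul_mem_mul (hρ (n - d)) (Ideal.subset_span rfl))

end FHVT5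
namespace FHVT6

variable {R : Type} [CommRing R] {M : Type} [AddCommGroup M] [Module R M]

theorem ass_of_submodule [IsNoetherianRing R] (N : Submodule R M) {P : Ideal R} (h : IsAssociatedPrime P M) :
    IsAssociatedPrime P N ∨ IsAssociatedPrime P (M ⧸ N) := by
  obtain ⟨hP, x, hx⟩ := isAssociatedPrime_iff.1 h
  by_cases hcase : ∃ a : R, a ∉ P ∧ a • x ∈ N
  · left
    obtain ⟨a, haP, haN⟩ := hcase
    refine isAssociatedPrime_iff.2 ⟨hP, ⟨⟨a • x, haN⟩, ?_⟩⟩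
    ext b
    rw [Submodule.mem_colon_singleton, Submodule.mem_bot, Subtype.ext_iff]
    rw [show (((b • ⟨a • x, haN⟩ : N)) : M) = b • a • x from rfl,
      show (((0 : N)) : M) = 0 from rfl, smul_smul]
    constructor
    · intro hb
      have hba : b * a ∈ P := Ideal.mul_mem_right _ _ hb
      rw [hx, Submodule.mem_colon_singleton, Submodule.mem_bot] at hba
      exact hba
    · intro hb
      have hba : b * a ∈ P := by
        rw [hx, Submodule.mem_colon_singleton, Submodule.mem_bot]
        exact hb
      rcases hP.mem_or_mem hba with h | h
      · exact h
      · exact absurd h haP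
  · right
    push_neg at hcase
    refine isAssociatedPrime_iff.2 ⟨hP, ⟨Submodule.Quotient.mk x, ?_⟩⟩
    ext b
    rw [Submodule.mem_colon_singleton, Submodule.mem_bot, ← Submodule.Quotient.mk_smul,
      Submodule.Quotient.mk_eq_zero]
    constructor
    · intro hb
      have : b • x = 0 := by
        have := hx ▸ hb
        rwa [Submodule.mem_colon_singleton, Submodule.mem_bot] at this
      rw [this]
      exact N.zero_mem
    · intro hb
      by_contra hbP
      exact absurd hb (hcase b hbP)

theorem ass_of_pi [IsNoetherianRing R] {ι : Type} [Fintype ι] {P : Ideal R}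
    (h : IsAssociatedPrime P (ι → M)) : IsAssociatedPrime P M := by
  classical
  rcases isEmpty_or_nonempty ι with he | hne
  · exfalso
    haveI : Subsingleton (ι → M) := ⟨fun a b => funext fun i => (IsEmpty.false i).elim⟩
    exact not_isAssociatedPrime_of_subsingleton h
  obtain ⟨hP, x, hx⟩ := isAssociatedPrime_iff.1 h
  have hle : ∀ i, P ≤ (Submodule.span R {x i}).annihilator := by
    intro i
    intro b hb
    rw [Submodule.mem_annihilator_span_singleton]
    have : b • x = 0 := by
      have := hx ▸ hb
      rwa [Submodule.mem_colon_singleton, Submodule.mem_bot] at this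
    exact congrFun this i
  have hprodle : (∏ i : ι, (Submodule.span R {x i}).annihilator) ≤ P := by
    intro b hb
    have hb' : ∀ i, b ∈ (Submodule.span R {x i}).annihilator := by
      intro i
      have h1 : (∏ i : ι, (Submodule.span R {x i}).annihilator)
          ≤ Finset.univ.inf (fun i => (Submodule.span R {x i}).annihilator) :=
        Ideal.prod_le_inf
      have h2 := Finset.inf_le (f := fun i => (Submodule.span R {x i}).annihilator)
        (Finset.mem_univ i)
      exact h2 (h1 hb)
    rw [hx, Submodule.mem_colon_singleton, Submodule.mem_bot]
    funext i
    have h3 := hb' i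
    rw [Submodule.mem_annihilator_span_singleton] at h3
    exact h3
  obtain ⟨i, _, hi⟩ := hP.prod_le.1 hprodle
  refine isAssociatedPrime_iff.2 ⟨hP, ⟨x i, ?_⟩⟩
  ext b
  rw [Submodule.mem_colon_singleton, Submodule.mem_bot, ← Submodule.mem_annihilator_span_singleton]
  exact ⟨fun h => hle i h, fun h => hi h⟩

theorem chain_stab {α : Type} [Fintype α] [DecidableEq α] (g : ℕ → Finset α) (N : ℕ)
    (h : ∀ n, N ≤ n → g n ⊆ g (n + 1)) :
    ∃ M, N ≤ M ∧ ∀ n, M ≤ n → g n = g M := by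
  have hchain : ∀ a b, N ≤ a → a ≤ b → g a ⊆ g b := by
    intro a b ha hab
    induction b, hab using Nat.le_induction with
    | base => exact Finset.Subset.refl _
    | succ n hn ih => exact ih.trans (h n (ha.trans hn))
  have key : ∀ fuel N', N ≤ N' → Fintype.card α - (g N').card ≤ fuel →
      ∃ M, N' ≤ M ∧ ∀ n, M ≤ n → g n = g M := by
    intro fuel
    induction fuel with
    | zero =>
      intro N' hN' hcard
      refine ⟨N', le_rfl, fun n hn => ?_⟩
      have h1 := hchain N' n hN' hn
      have h2 : (g N').card = Fintype.card α := by
        have := (g N').card_le_univ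
        omega
      apply Finset.Subset.antisymm _ h1
      have h3 : g N' = Finset.univ := Finset.eq_univ_of_card _ h2
      rw [h3]
      exact Finset.subset_univ _
    | succ fuel ih =>
      intro N' hN' hcard
      by_cases hconst : ∀ n, N' ≤ n → g n = g N'
      · exact ⟨N', le_rfl, hconst⟩
      · push_neg at hconst
        obtain ⟨n₁, hn₁, hne⟩ := hconst
        have hss : g N' ⊂ g n₁ := lt_of_le_of_ne (hchain N' n₁ hN' hn₁) (Ne.symm hne)
        have hlt := Finset.card_lt_card hss
        have hcard₁ : (g n₁).card ≤ Fintype.card α := (g n₁).card_le_univ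
        obtain ⟨M, hM1, hM2⟩ := ih n₁ (hN'.trans hn₁) (by omega)
        exact ⟨M, hn₁.trans hM1, hM2⟩
  exact key (Fintype.card α) N le_rfl (by omega)

theorem chain_stab_down {α : Type} [Fintype α] [DecidableEq α] (g : ℕ → Finset α) (N : ℕ)
    (h : ∀ n, N ≤ n → g (n + 1) ⊆ g n) :
    ∃ M, N ≤ M ∧ ∀ n, M ≤ n → g n = g M := by
  obtain ⟨M, hM1, hM2⟩ := chain_stab (fun n => (g n)ᶜ) N
    (fun n hn => Finset.compl_subset_compl.2 (h n hn))
  refine ⟨M, hM1, fun n hn => ?_⟩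
  have h1 := hM2 n hn
  have h2 := congrArg (fun s : Finset α => sᶜ) h1
  simpa using h2

end FHVT6
namespace FHVT7
open FHVT FHVT2 FHVT3 FHVT4 FHVT5 FHVT6

variable {K : Type} [Field K] {r : ℕ} (E : Set (Finset (Fin r)))

/-- universe bound: associated primes of powers of the cover ideal are variable primes -/
theorem ass_pow_PT {n : ℕ} {P : Ideal (MvPolynomial (Fin r) K)}
    (h : IsAssociatedPrime P ((MvPolynomial (Fin r) K) ⧸ (coverIdeal K E) ^ n)) :
    ∃ T : Finset (Fin r), P = PT K T := by
  have heq : (coverIdeal K E) ^ n = msp K (sumN (τ '' {W | IsMinCover E W}) n) := by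
    rw [coverIdeal_eq, msp_pow]
  rw [heq] at h
  exact ass_msp h

/-- the middle layer `J^n/J^{n+1}` as a submodule of `R/J^{n+1}` -/
noncomputable def Nn (n : ℕ) :
    Submodule (MvPolynomial (Fin r) K) ((MvPolynomial (Fin r) K) ⧸ (coverIdeal K E) ^ (n + 1)) :=
  Submodule.map ((coverIdeal K E) ^ (n + 1) :
    Ideal (MvPolynomial (Fin r) K)).mkQ ((coverIdeal K E) ^ n : Ideal (MvPolynomial (Fin r) K))

theorem assoc_step {n : ℕ} {P : Ideal (MvPolynomial (Fin r) K)}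
    (h : IsAssociatedPrime P ((MvPolynomial (Fin r) K) ⧸ (coverIdeal K E) ^ (n + 1))) :
    IsAssociatedPrime P ↥(Nn (K := K) E n) ∨
      IsAssociatedPrime P ((MvPolynomial (Fin r) K) ⧸ (coverIdeal K E) ^ n) := by
  rcases FHVT6.ass_of_submodule (Nn (K := K) E n) h with h' | h'
  · exact Or.inl h'
  · right
    have e := Submodule.quotientQuotientEquivQuotient
      ((coverIdeal K E) ^ (n+1) : Ideal (MvPolynomial (Fin r) K))
      ((coverIdeal K E) ^ n : Ideal (MvPolynomial (Fin r) K))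
      (Ideal.pow_le_pow_right (by omega))
    exact (e.isAssociatedPrime_iff).1 h'

theorem B_sub_A {n : ℕ} {P : Ideal (MvPolynomial (Fin r) K)}
    (h : IsAssociatedPrime P ↥(Nn (K := K) E n)) :
    IsAssociatedPrime P ((MvPolynomial (Fin r) K) ⧸ (coverIdeal K E) ^ (n + 1)) :=
  h.map_of_injective (Nn (K := K) E n).subtype (Submodule.injective_subtype _)

/-- eventual monotonicity of `Ass(J^n/J^{n+1})` -/
theorem B_mono : ∃ N₁ : ℕ, ∀ n, N₁ ≤ n → ∀ P : Ideal (MvPolynomial (Fin r) K),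
    IsAssociatedPrime P ↥(Nn (K := K) E n) → IsAssociatedPrime P ↥(Nn (K := K) E (n + 1)) := by
  classical
  obtain ⟨N₁, hN₁⟩ := FHVT5.kernel_vanishes (coverIdeal K E)
  obtain ⟨s, hs⟩ : (coverIdeal K E).FG := IsNoetherian.noetherian _
  refine ⟨N₁, fun n hn P hP => ?_⟩
  have huJ : ∀ u ∈ s, (u : MvPolynomial (Fin r) K) ∈ coverIdeal K E := by
    intro u hu
    rw [← hs]
    exact Ideal.subset_span hu
  -- the multiplication maps
  have hcond : ∀ u ∈ s, ((coverIdeal K E) ^ (n+1) : Ideal (MvPolynomial (Fin r) K)) ≤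
      Submodule.comap (LinearMap.lsmul (MvPolynomial (Fin r) K) (MvPolynomial (Fin r) K) u)
        ((coverIdeal K E) ^ (n+2) : Ideal (MvPolynomial (Fin r) K)) := by
    intro u hu x hx
    simp only [Submodule.mem_comap, LinearMap.lsmul_apply, smul_eq_mul]
    have : u * x ∈ (coverIdeal K E) * (coverIdeal K E) ^ (n+1) :=
      Ideal.mul_mem_mul (huJ u hu) hx
    rwa [← pow_succ'] at this
  let μ : ∀ u ∈ s, ((MvPolynomial (Fin r) K) ⧸ (coverIdeal K E) ^ (n+1)) →ₗ[MvPolynomial (Fin r) K]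
      ((MvPolynomial (Fin r) K) ⧸ (coverIdeal K E) ^ (n+2)) := fun u hu =>
    Submodule.mapQ _ _ (LinearMap.lsmul _ _ u) (hcond u hu)
  have hrestrict : ∀ u (hu : u ∈ s), ∀ x ∈ Nn (K := K) E n, (μ u hu) x ∈ Nn (K := K) E (n+1) := by
    rintro u hu x ⟨m, hm, rfl⟩
    refine ⟨u * m, ?_, ?_⟩
    · have : u * m ∈ (coverIdeal K E) * (coverIdeal K E) ^ n :=
        Ideal.mul_mem_mul (huJ u hu) hm
      rwa [← pow_succ'] at this
    · show ((coverIdeal K E) ^ (n+2) : Ideal (MvPolynomial (Fin r) K)).mkQ (u * m) = _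
      rw [Submodule.mkQ_apply, Submodule.mkQ_apply, Submodule.mapQ_apply,
        LinearMap.lsmul_apply, smul_eq_mul]
  let Φ : ↥(Nn (K := K) E n) →ₗ[MvPolynomial (Fin r) K] (↥s → ↥(Nn (K := K) E (n+1))) :=
    LinearMap.pi (fun u : ↥s => ((μ u.1 u.2).restrict (p := Nn (K := K) E n) (q := Nn (K := K) E (n+1))
      (hrestrict u.1 u.2)))
  have hinj : Function.Injective Φ := by
    rw [← LinearMap.ker_eq_bot]
    rw [Submodule.eq_bot_iff]
    rintro ⟨xv, m, hm, rfl⟩ hx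
    rw [LinearMap.mem_ker] at hx
    have hcomp : ∀ u (hu : u ∈ s), u * m ∈ ((coverIdeal K E) ^ (n+2) :
        Ideal (MvPolynomial (Fin r) K)) := by
      intro u hu
      have h1 := congrFun hx ⟨u, hu⟩
      have h2 : ((μ u hu) (((coverIdeal K E) ^ (n+1) :
          Ideal (MvPolynomial (Fin r) K)).mkQ m)) = 0 := by
        have := congrArg Subtype.val h1
        exact this
      rw [Submodule.mkQ_apply, Submodule.mapQ_apply, LinearMap.lsmul_apply, smul_eq_mul] at h2
      rwa [Submodule.Quotient.mk_eq_zero] at h2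
    have hallJ : ∀ u ∈ coverIdeal K E, m * u ∈ ((coverIdeal K E) ^ (n+2) :
        Ideal (MvPolynomial (Fin r) K)) := by
      intro u hu
      rw [← hs] at hu
      induction hu using Submodule.span_induction with
      | mem v hv => rw [mul_comm]; exact hcomp v hv
      | zero => rw [mul_zero]; exact Ideal.zero_mem _
      | add a b _ _ ha hb => rw [mul_add]; exact Ideal.add_mem _ ha hb
      | smul c a _ ha =>
        rw [smul_eq_mul, show m * (c * a) = c * (m * a) by ring]
        exact Ideal.mul_mem_left _ _ ha
    have hm1 : m ∈ (coverIdeal K E) ^ (n+1) := hN₁ n hn m hm hallJ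
    apply Subtype.ext
    show ((coverIdeal K E) ^ (n+1) : Ideal (MvPolynomial (Fin r) K)).mkQ m = 0
    rw [Submodule.mkQ_apply, Submodule.Quotient.mk_eq_zero]
    exact hm1
  exact FHVT6.ass_of_pi (hP.map_of_injective Φ hinj)

end FHVT7

namespace FHVT7

theorem astab_set_aux {K : Type} [Field K] {r : ℕ} (E : Set (Finset (Fin r))) :
    ∃ s : ℕ, 1 ≤ s ∧ ∀ n : ℕ, s ≤ n →
      associatedPrimes (MvPolynomial (Fin r) K)
          ((MvPolynomial (Fin r) K) ⧸ (coverIdeal K E) ^ n)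
        = associatedPrimes (MvPolynomial (Fin r) K)
            ((MvPolynomial (Fin r) K) ⧸ (coverIdeal K E) ^ s) := by
  classical
  obtain ⟨N₁, hB⟩ := B_mono (K := K) E
  set bset : ℕ → Finset (Finset (Fin r)) := fun n =>
    Finset.univ.filter (fun T => IsAssociatedPrime (FHVT3.PT K T) ↥(Nn (K := K) E n)) with hbset
  have hbsub : ∀ n, N₁ ≤ n → bset n ⊆ bset (n+1) := by
    intro n hn T hT
    rw [hbset, Finset.mem_filter] at hT ⊢
    exact ⟨Finset.mem_univ _, hB n hn _ hT.2⟩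
  obtain ⟨M₂, hM₂1, hM₂2⟩ := FHVT6.chain_stab bset N₁ hbsub
  set aset : ℕ → Finset (Finset (Fin r)) := fun n =>
    Finset.univ.filter (fun T => IsAssociatedPrime (FHVT3.PT K T)
      ((MvPolynomial (Fin r) K) ⧸ (coverIdeal K E) ^ n)) with haset
  set dset : ℕ → Finset (Finset (Fin r)) := fun n => aset n \ bset M₂ with hdset
  have hdsub : ∀ n, M₂ ≤ n → dset (n+1) ⊆ dset n := by
    intro n hn T hT
    rw [hdset, Finset.mem_sdiff, haset, Finset.mem_filter] at hT ⊢
    obtain ⟨⟨_, hT1⟩, hT2⟩ := hT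
    rcases assoc_step E hT1 with h | h
    · exfalso
      apply hT2
      rw [← hM₂2 n hn, hbset, Finset.mem_filter]
      exact ⟨Finset.mem_univ _, h⟩
    · exact ⟨⟨Finset.mem_univ _, h⟩, hT2⟩
  obtain ⟨M₃, hM₃1, hM₃2⟩ := FHVT6.chain_stab_down dset M₂ hdsub
  have key : ∀ n, M₃ + 1 ≤ n → ∀ P : Ideal (MvPolynomial (Fin r) K),
      P ∈ associatedPrimes (MvPolynomial (Fin r) K)
          ((MvPolynomial (Fin r) K) ⧸ (coverIdeal K E) ^ n)
        ↔ ∃ T : Finset (Fin r), P = FHVT3.PT K T ∧ (T ∈ dset M₃ ∨ T ∈ bset M₂) := by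
    intro n hn P
    constructor
    · intro hP
      obtain ⟨T, rfl⟩ := ass_pow_PT E hP
      refine ⟨T, rfl, ?_⟩
      by_cases hTb : T ∈ bset M₂
      · exact Or.inr hTb
      · left
        rw [← hM₃2 n (by omega), hdset, Finset.mem_sdiff, haset, Finset.mem_filter]
        exact ⟨⟨Finset.mem_univ _, hP⟩, hTb⟩
    · rintro ⟨T, rfl, hT | hT⟩
      · rw [← hM₃2 n (by omega), hdset, Finset.mem_sdiff, haset, Finset.mem_filter] at hT
        exact hT.1.2
      · have h1 : T ∈ bset (n - 1) := by
          rw [hM₂2 (n-1) (by omega)]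
          exact hT
        rw [hbset, Finset.mem_filter] at h1
        have h2 := B_sub_A E h1.2
        rw [show n - 1 + 1 = n from by omega] at h2
        exact h2
  refine ⟨M₃ + 1, by omega, fun n hn => ?_⟩
  ext P
  rw [key n hn P, key (M₃ + 1) le_rfl P]

end FHVT7

/-- **Francisco–Hà–Van Tuyl.** For a simple hypergraph `𝓗` (no isolated vertices, every
edge of cardinality ≥ 2, no edge contained in another) with cover ideal `J(𝓗)`:
`astab(J(𝓗)) ≥ χ(𝓗) − 1`. -/
theorem chromatic_le_astab_coverIdeal (K : Type) [Field K] (r : ℕ)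
    (E : Set (Finset (Fin r)))
    (hiso : ∀ v : Fin r, ∃ e ∈ E, v ∈ e)
    (hcard : ∀ e ∈ E, 2 ≤ e.card)
    (hanti : ∀ e ∈ E, ∀ f ∈ E, e ⊆ f → e = f) :
    hChromaticNumber E - 1 ≤ astab (coverIdeal K E) := by
  classical
  by_cases hchi : hChromaticNumber E ≤ 1
  · have h0 : hChromaticNumber E - 1 = 0 := by omega
    rw [h0]
    exact Nat.zero_le _
  push_neg at hchi
  have hd1 : 1 ≤ hChromaticNumber E - 1 := by omega
  have hne : ∀ e ∈ E, e.Nonempty := fun e he =>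
    Finset.card_pos.1 (by have := hcard e he; omega)
  have hnotcol : ¬ FHVT2.Colorable (hChromaticNumber E - 1) E := by
    intro hc
    have := FHVT2.chrom_le hc
    omega
  obtain ⟨S, hS, hScrit⟩ := FHVT2.exists_critical hnotcol
  have hSne : S.Nonempty := by
    rcases Finset.eq_empty_or_nonempty S with rfl | h
    · exfalso
      apply hS
      refine ⟨fun _ => ⟨0, hd1⟩, ?_⟩
      rintro e ⟨he, hesub⟩ i hall
      have he0 : e = ∅ := Finset.subset_empty.1 hesub
      have h2 := hcard e he
      rw [he0] at h2
      simp at h2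
    · exact h
  have hassd : IsAssociatedPrime (FHVT3.PT K S)
      ((MvPolynomial (Fin r) K) ⧸ (coverIdeal K E) ^ (hChromaticNumber E - 1)) :=
    FHVT3.PT_isAssociated hd1 hS hScrit
  obtain ⟨s₁, hs₁1, hs₁2⟩ := FHVT7.astab_set_aux (K := K) E
  have hmem : astab (coverIdeal K E) ∈ {s : ℕ | 1 ≤ s ∧ ∀ n : ℕ, s ≤ n →
      associatedPrimes (MvPolynomial (Fin r) K)
          ((MvPolynomial (Fin r) K) ⧸ (coverIdeal K E) ^ n)
        = associatedPrimes (MvPolynomial (Fin r) K)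
          ((MvPolynomial (Fin r) K) ⧸ (coverIdeal K E) ^ s)} := by
    rw [astab]
    exact Nat.sInf_mem ⟨s₁, hs₁1, hs₁2⟩
  obtain ⟨hge1, hstab⟩ := hmem
  by_contra hlt
  push_neg at hlt
  have hAds := hstab (hChromaticNumber E - 1) (by omega)
  have hass_s : IsAssociatedPrime (FHVT3.PT K S)
      ((MvPolynomial (Fin r) K) ⧸ (coverIdeal K E) ^ (astab (coverIdeal K E))) := by
    have hm : FHVT3.PT K S ∈ associatedPrimes (MvPolynomial (Fin r) K)
        ((MvPolynomial (Fin r) K) ⧸ (coverIdeal K E) ^ (hChromaticNumber E - 1)) := hassd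
    rw [hAds] at hm
    exact hm
  have hcol := FHVT3.colorable_of_isAssociated hcard hSne hass_s
  have hcold : FHVT2.Colorable (hChromaticNumber E - 1) (FHVT2.ES E S) :=
    FHVT2.colorable_mono (fun e he => hne e (FHVT2.ES_subset he)) hcol (by omega)
  exact hS hcold
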